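/- Let $E,F$ be Banach spaces (over the real or complex field) and fix $p^*\in(1,\infty)$. Let $(r_1,q_1)$ and $(r_2,q_2)$ be pairs with $r_k\in[1,\infty)$, $q_k\in(1,\infty)$ and $1/r_k = 1/q_k + 1/p^*$ for $k=1,2$. Then a bounded linear operator $T:E\to F$ satisfies, for some $C\ge 0$, $(\sum_{i=1}^m|\varphi_i(T(x_i))|^{r_1})^{1/r_1} \le C\,(\sum_{i=1}^m\|x_i\|^{q_1})^{1/q_1}\,\|(\varphi_i)_{i=1}^m\|_{w,p^*}$ for all $m\in\mathbb{N}$, $x_i\in E$, $\varphi_i\in F'$, if and only if it satisfies the analogous inequality with $(r_2,q_2)$ in place of $(r_1,q_1)$ for some $C\ge 0$. -/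

import Mathlib

open scoped BigOperators

/-- The weak `q`-norm of a finite family of continuous linear functionals on `F`. -/
noncomputable def weakNorm {𝕜 F : Type*} [RCLike 𝕜] [NormedAddCommGroup F] [NormedSpace 𝕜 F]
    {ι : Type*} [Fintype ι] (q : ℝ) (φ : ι → F →L[𝕜] 𝕜) : ℝ :=
  ⨆ y : Metric.closedBall (0 : F) 1, (∑ i, ‖φ i (y : F)‖ ^ q) ^ (1 / q)

lemma weakNorm_nonneg' {𝕜 F : Type*} [RCLike 𝕜] [NormedAddCommGroup F] [NormedSpace 𝕜 F]
    {ι : Type*} [Fintype ι] (q : ℝ) (φ : ι → F →L[𝕜] 𝕜) : 0 ≤ weakNorm q φ := by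
  unfold weakNorm
  exact Real.iSup_nonneg fun _ => Real.rpow_nonneg
    (Finset.sum_nonneg fun _ _ => Real.rpow_nonneg (norm_nonneg _) _) _

set_option maxHeartbeats 1000000 in
lemma key_incl {𝕜 E F : Type*} [RCLike 𝕜]
    [NormedAddCommGroup E] [NormedSpace 𝕜 E]
    [NormedAddCommGroup F] [NormedSpace 𝕜 F]
    (pstar r q r' q' : ℝ)
    (hr : 1 ≤ r) (hq : 1 < q) (h : 1 / r = 1 / q + 1 / pstar)
    (hr' : 1 ≤ r') (hq' : 1 < q') (h' : 1 / r' = 1 / q' + 1 / pstar)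
    (hle : q ≤ q') (T : E →L[𝕜] F) :
    (∃ C ≥ 0, ∀ (m : ℕ) (x : Fin m → E) (φ : Fin m → F →L[𝕜] 𝕜),
        (∑ i, ‖φ i (T (x i))‖ ^ r) ^ (1 / r) ≤
          C * (∑ i, ‖x i‖ ^ q) ^ (1 / q) * weakNorm pstar φ) →
    (∃ C ≥ 0, ∀ (m : ℕ) (x : Fin m → E) (φ : Fin m → F →L[𝕜] 𝕜),
        (∑ i, ‖φ i (T (x i))‖ ^ r') ^ (1 / r') ≤
          C * (∑ i, ‖x i‖ ^ q') ^ (1 / q') * weakNorm pstar φ) := by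
  rintro ⟨C, hC, H⟩
  have hq0 : (0:ℝ) < q := lt_trans one_pos hq
  have hq'0 : (0:ℝ) < q' := lt_trans one_pos hq'
  have hr0 : (0:ℝ) < r := lt_of_lt_of_le one_pos hr
  have hr'0 : (0:ℝ) < r' := lt_of_lt_of_le one_pos hr'
  rcases eq_or_lt_of_le hle with rfl | hlt
  · have hrr : r = r' := by
      have h12 : 1/r = 1/r' := by rw [h, h']
      field_simp at h12; linarith
    subst hrr
    exact ⟨C, hC, H⟩
  · set s : ℝ := 1 / (1/q - 1/q') with hs_def
    have hd : 0 < 1/q - 1/q' := by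
      have := one_div_lt_one_div_of_lt hq0 hlt
      linarith
    have hs0 : 0 < s := one_div_pos.mpr hd
    have hs : 1/s = 1/q - 1/q' := one_div_one_div _
    have hrs : 1/r = 1/r' + 1/s := by rw [h, h', hs]; ring
    have hqs : q < s := by
      rw [hs_def, lt_div_iff₀ hd]
      have e : q * (1/q - 1/q') = 1 - q/q' := by
        rw [mul_sub, mul_one_div_cancel hq0.ne', mul_one_div]
      rw [e]
      have : 0 < q / q' := div_pos hq0 hq'0
      linarith
    clear_value s
    clear hs_def hd
    -- exponent identities
    have E1 : (r'/s + 1) * r = r' := by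
      field_simp at hrs ⊢
      nlinarith [hrs, hs0.ne', hr0.ne']
    have E2 : (s/q)⁻¹ + (q'/q)⁻¹ = 1 := by
      field_simp at hs ⊢
      nlinarith [hs]
    have E3 : (r'/s*q)*(s/q) = r' := by field_simp
    have E4 : q*(q'/q) = q' := by field_simp
    have E5 : (1/(s/q))*(1/q) = 1/s := by field_simp; try ring
    have E6 : (1/(q'/q))*(1/q) = 1/q' := by field_simp; try ring
    refine ⟨C, hC, ?_⟩
    intro m x φ
    have hw : 0 ≤ weakNorm pstar φ := weakNorm_nonneg' pstar φ
    set w := weakNorm pstar φ with hw_def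
    have ha : ∀ i, (0:ℝ) ≤ ‖φ i (T (x i))‖ := fun i => norm_nonneg _
    set A : ℝ := ∑ i, ‖φ i (T (x i))‖ ^ r' with hA_def
    have hA0 : 0 ≤ A := Finset.sum_nonneg fun i _ => Real.rpow_nonneg (ha i) _
    set B : ℝ := ∑ i, ‖x i‖ ^ q' with hB_def
    have hB0 : 0 ≤ B := Finset.sum_nonneg fun i _ => Real.rpow_nonneg (norm_nonneg _) _
    rcases eq_or_lt_of_le hA0 with hA | hA
    · rw [← hA, Real.zero_rpow (by positivity : (1:ℝ)/r' ≠ 0)]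
      exact mul_nonneg (mul_nonneg hC (Real.rpow_nonneg hB0 _)) hw
    · have key := H m (fun i => ((‖φ i (T (x i))‖ ^ (r'/s) : ℝ) : 𝕜) • x i) φ
      have hLHS : ∑ i, ‖φ i (T (((‖φ i (T (x i))‖ ^ (r'/s) : ℝ) : 𝕜) • x i))‖ ^ r = A := by
        refine Finset.sum_congr rfl fun i _ => ?_
        simp only [map_smul, smul_eq_mul, norm_mul, RCLike.norm_ofReal,
          abs_of_nonneg (Real.rpow_nonneg (ha i) (r'/s))]
        have e1 : ‖φ i (T (x i))‖ ^ (r'/s) * ‖φ i (T (x i))‖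
            = ‖φ i (T (x i))‖ ^ (r'/s + 1) := by
          rw [Real.rpow_add' (ha i) (by positivity), Real.rpow_one]
        rw [e1, ← Real.rpow_mul (ha i), E1]
      have hpq : Real.HolderConjugate (s/q) (q'/q) := Real.holderConjugate_iff.mpr ⟨(one_lt_div hq0).mpr hqs, E2⟩
      have hX : ∀ i, ‖((‖φ i (T (x i))‖ ^ (r'/s) : ℝ) : 𝕜) • x i‖ ^ q
          = ‖φ i (T (x i))‖ ^ (r'/s*q) * ‖x i‖ ^ q := by
        intro i
        rw [norm_smul, RCLike.norm_ofReal, abs_of_nonneg (Real.rpow_nonneg (ha i) _),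
          Real.mul_rpow (Real.rpow_nonneg (ha i) _) (norm_nonneg _),
          ← Real.rpow_mul (ha i)]
      have holder := Real.inner_le_Lp_mul_Lq (Finset.univ)
        (fun i => ‖φ i (T (x i))‖ ^ (r'/s*q)) (fun i => ‖x i‖ ^ q) hpq
      have hfs : ∑ i, |‖φ i (T (x i))‖ ^ (r'/s*q)| ^ (s/q) = A := by
        refine Finset.sum_congr rfl fun i _ => ?_
        rw [abs_of_nonneg (Real.rpow_nonneg (ha i) _), ← Real.rpow_mul (ha i), E3]
      have hgs : ∑ i, |‖x i‖ ^ q| ^ (q'/q) = B := by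
        refine Finset.sum_congr rfl fun i _ => ?_
        rw [abs_of_nonneg (Real.rpow_nonneg (norm_nonneg _) _),
          ← Real.rpow_mul (norm_nonneg _), E4]
      rw [hfs, hgs] at holder
      have hXsum : ∑ i, ‖((‖φ i (T (x i))‖ ^ (r'/s) : ℝ) : 𝕜) • x i‖ ^ q
          ≤ A ^ (1/(s/q)) * B ^ (1/(q'/q)) := by
        calc ∑ i, ‖((‖φ i (T (x i))‖ ^ (r'/s) : ℝ) : 𝕜) • x i‖ ^ q
            = ∑ i, ‖φ i (T (x i))‖ ^ (r'/s*q) * ‖x i‖ ^ q :=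
              Finset.sum_congr rfl fun i _ => hX i
          _ ≤ A ^ (1/(s/q)) * B ^ (1/(q'/q)) := holder
      have hmid : (∑ i, ‖((‖φ i (T (x i))‖ ^ (r'/s) : ℝ) : 𝕜) • x i‖ ^ q) ^ (1/q)
          ≤ A ^ (1/s) * B ^ (1/q') := by
        have h1 : (A ^ (1/(s/q)) * B ^ (1/(q'/q))) ^ (1/q) = A ^ (1/s) * B ^ (1/q') := by
          rw [Real.mul_rpow (Real.rpow_nonneg hA0 _) (Real.rpow_nonneg hB0 _),
            ← Real.rpow_mul hA0, ← Real.rpow_mul hB0, E5, E6]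
        rw [← h1]
        exact Real.rpow_le_rpow
          (Finset.sum_nonneg fun i _ => Real.rpow_nonneg (norm_nonneg _) _) hXsum
          (by positivity)
      rw [hLHS] at key
      have step2 : C * (∑ i, ‖((‖φ i (T (x i))‖ ^ (r'/s) : ℝ) : 𝕜) • x i‖ ^ q) ^ (1/q) * w
          ≤ C * (A ^ (1/s) * B ^ (1/q')) * w :=
        mul_le_mul_of_nonneg_right (mul_le_mul_of_nonneg_left hmid hC) hw
      have chain : A ^ (1/r') * A ^ (1/s) ≤ (C * B ^ (1/q') * w) * A ^ (1/s) := by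
        calc A ^ (1/r') * A ^ (1/s) = A ^ (1/r) := by
              rw [hrs, Real.rpow_add hA]
          _ ≤ C * (∑ i, ‖((‖φ i (T (x i))‖ ^ (r'/s) : ℝ) : 𝕜) • x i‖ ^ q) ^ (1/q) * w := key
          _ ≤ C * (A ^ (1/s) * B ^ (1/q')) * w := step2
          _ = (C * B ^ (1/q') * w) * A ^ (1/s) := by ring
      exact le_of_mul_le_mul_right chain (Real.rpow_pos_of_pos hA _)

set_option maxHeartbeats 1000000 in
lemma key_decl {𝕜 E F : Type*} [RCLike 𝕜]
    [NormedAddCommGroup E] [NormedSpace 𝕜 E]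
    [NormedAddCommGroup F] [NormedSpace 𝕜 F]
    (pstar r q r' q' : ℝ)
    (hr : 1 ≤ r) (hq : 1 < q) (h : 1 / r = 1 / q + 1 / pstar)
    (hr' : 1 ≤ r') (hq' : 1 < q') (h' : 1 / r' = 1 / q' + 1 / pstar)
    (hle : q ≤ q') (T : E →L[𝕜] F) :
    (∃ C ≥ 0, ∀ (m : ℕ) (x : Fin m → E) (φ : Fin m → F →L[𝕜] 𝕜),
        (∑ i, ‖φ i (T (x i))‖ ^ r') ^ (1 / r') ≤
          C * (∑ i, ‖x i‖ ^ q') ^ (1 / q') * weakNorm pstar φ) →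
    (∃ C ≥ 0, ∀ (m : ℕ) (x : Fin m → E) (φ : Fin m → F →L[𝕜] 𝕜),
        (∑ i, ‖φ i (T (x i))‖ ^ r) ^ (1 / r) ≤
          C * (∑ i, ‖x i‖ ^ q) ^ (1 / q) * weakNorm pstar φ) := by
  rintro ⟨C, hC, H⟩
  have hq0 : (0:ℝ) < q := lt_trans one_pos hq
  have hq'0 : (0:ℝ) < q' := lt_trans one_pos hq'
  have hr0 : (0:ℝ) < r := lt_of_lt_of_le one_pos hr
  have hr'0 : (0:ℝ) < r' := lt_of_lt_of_le one_pos hr'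
  rcases eq_or_lt_of_le hle with rfl | hlt
  · have hrr : r' = r := by
      have h12 : 1/r = 1/r' := by rw [h, h']
      field_simp at h12; linarith
    subst hrr
    exact ⟨C, hC, H⟩
  · set s : ℝ := 1 / (1/q - 1/q') with hs_def
    have hd : 0 < 1/q - 1/q' := by
      have := one_div_lt_one_div_of_lt hq0 hlt
      linarith
    have hs0 : 0 < s := one_div_pos.mpr hd
    have hs : 1/s = 1/q - 1/q' := one_div_one_div _
    have hrs : 1/r = 1/r' + 1/s := by rw [h, h', hs]; ring
    clear_value s
    clear hs_def hd
    have hrr' : r < r' := by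
      have h1 : 1/r' < 1/r := by
        rw [hrs]
        have := one_div_pos.mpr hs0
        linarith
      have := one_div_lt_one_div_of_lt (one_div_pos.mpr hr'0) h1
      rwa [one_div_one_div, one_div_one_div] at this
    -- exponent identities
    have F0 : q/q' - 1 ≠ 0 := by
      have : q/q' < 1 := (div_lt_one hq'0).mpr hlt
      linarith
    have F1 : (q/q' - 1)*q' + q' = q := by field_simp; ring
    have F2 : r*(r'/r) = r' := by field_simp
    have F3 : q*(r/s)*(s/r) = q := by field_simp; try ring
    have F4 : (r'/r)⁻¹ + (s/r)⁻¹ = 1 := by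
      field_simp at hrs ⊢
      nlinarith [hrs]
    have F5 : (q/q' - 1)*r + q*(r/s) = 0 := by
      field_simp at hs ⊢
      nlinarith [hs]
    have F6 : 1/q' + 1/s = 1/q := by rw [hs]; ring
    have F7 : (1/(r'/r))*(1/r) = 1/r' := by field_simp; try ring
    have F8 : (1/(s/r))*(1/r) = 1/s := by field_simp; try ring
    refine ⟨C, hC, ?_⟩
    intro m x φ
    have hw : 0 ≤ weakNorm pstar φ := weakNorm_nonneg' pstar φ
    set w := weakNorm pstar φ with hw_def
    have ha : ∀ i, (0:ℝ) ≤ ‖φ i (T (x i))‖ := fun i => norm_nonneg _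
    have ht : ∀ i, (0:ℝ) ≤ ‖x i‖ ^ (q/q' - 1) := fun i => Real.rpow_nonneg (norm_nonneg _) _
    set B : ℝ := ∑ i, ‖x i‖ ^ q with hB_def
    have hB0 : 0 ≤ B := Finset.sum_nonneg fun i _ => Real.rpow_nonneg (norm_nonneg _) _
    have key := H m (fun i => ((‖x i‖ ^ (q/q' - 1) : ℝ) : 𝕜) • x i) φ
    -- norms of scaled vectors
    have hN : ∀ i, ‖φ i (T (((‖x i‖ ^ (q/q' - 1) : ℝ) : 𝕜) • x i))‖
        = ‖x i‖ ^ (q/q' - 1) * ‖φ i (T (x i))‖ := by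
      intro i
      simp only [map_smul, smul_eq_mul, norm_mul, RCLike.norm_ofReal,
        abs_of_nonneg (ht i)]
    have hBsum : ∑ i, ‖((‖x i‖ ^ (q/q' - 1) : ℝ) : 𝕜) • x i‖ ^ q' = B := by
      refine Finset.sum_congr rfl fun i _ => ?_
      rw [norm_smul, RCLike.norm_ofReal, abs_of_nonneg (ht i)]
      rcases eq_or_lt_of_le (norm_nonneg (x i)) with hx | hx
      · rw [← hx, Real.zero_rpow F0, zero_mul,
          Real.zero_rpow (by positivity : q' ≠ 0), Real.zero_rpow (by positivity : q ≠ 0)]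
      · rw [Real.mul_rpow (ht i) (norm_nonneg _), ← Real.rpow_mul (norm_nonneg _),
          ← Real.rpow_add hx, F1]
    rw [hBsum] at key
    set X : ℝ := ∑ i, (‖x i‖ ^ (q/q' - 1) * ‖φ i (T (x i))‖) ^ r' with hX_def
    have hX0 : 0 ≤ X := Finset.sum_nonneg fun i _ =>
      Real.rpow_nonneg (mul_nonneg (ht i) (ha i)) _
    have hkeyL : ∑ i, ‖φ i (T (((‖x i‖ ^ (q/q' - 1) : ℝ) : 𝕜) • x i))‖ ^ r' = X := by
      refine Finset.sum_congr rfl fun i _ => ?_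
      rw [hN i]
    rw [hkeyL] at key
    -- Hölder: ∑ a^r = ∑ (t*a)^r * ‖x‖^(q*(r/s)) ≤ X^(r/r') * B^(r/s)
    have hpq : Real.HolderConjugate (r'/r) (s/r) := Real.holderConjugate_iff.mpr ⟨(one_lt_div hr0).mpr hrr', F4⟩
    have holder := Real.inner_le_Lp_mul_Lq (Finset.univ)
      (fun i => (‖x i‖ ^ (q/q' - 1) * ‖φ i (T (x i))‖) ^ r)
      (fun i => ‖x i‖ ^ (q*(r/s))) hpq
    have hfs : ∑ i, |(‖x i‖ ^ (q/q' - 1) * ‖φ i (T (x i))‖) ^ r| ^ (r'/r) = X := by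
      refine Finset.sum_congr rfl fun i _ => ?_
      rw [abs_of_nonneg (Real.rpow_nonneg (mul_nonneg (ht i) (ha i)) _),
        ← Real.rpow_mul (mul_nonneg (ht i) (ha i)), F2]
    have hgs : ∑ i, |‖x i‖ ^ (q*(r/s))| ^ (s/r) = B := by
      refine Finset.sum_congr rfl fun i _ => ?_
      rw [abs_of_nonneg (Real.rpow_nonneg (norm_nonneg _) _),
        ← Real.rpow_mul (norm_nonneg _), F3]
    rw [hfs, hgs] at holder
    have hsum_eq : ∑ i, ‖φ i (T (x i))‖ ^ r
        = ∑ i, (‖x i‖ ^ (q/q' - 1) * ‖φ i (T (x i))‖) ^ r * ‖x i‖ ^ (q*(r/s)) := by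
      refine Finset.sum_congr rfl fun i _ => ?_
      rcases eq_or_lt_of_le (norm_nonneg (x i)) with hx | hx
      · have hx0 : x i = 0 := norm_eq_zero.mp hx.symm
        have hφ0 : ‖φ i (T (x i))‖ = 0 := by rw [hx0]; simp
        rw [hφ0, ← hx, Real.zero_rpow F0, zero_mul,
          Real.zero_rpow (by positivity : r ≠ 0), zero_mul]
      · rw [Real.mul_rpow (ht i) (ha i), ← Real.rpow_mul (norm_nonneg _)]
        rw [mul_comm (‖x i‖ ^ ((q/q'-1)*r)) (‖φ i (T (x i))‖ ^ r), mul_assoc,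
          ← Real.rpow_add hx, F5, Real.rpow_zero, mul_one]
    calc (∑ i, ‖φ i (T (x i))‖ ^ r) ^ (1/r)
        = (∑ i, (‖x i‖ ^ (q/q' - 1) * ‖φ i (T (x i))‖) ^ r * ‖x i‖ ^ (q*(r/s))) ^ (1/r) := by
          rw [hsum_eq]
      _ ≤ (X ^ (1/(r'/r)) * B ^ (1/(s/r))) ^ (1/r) := by
          refine Real.rpow_le_rpow ?_ holder (by positivity)
          exact Finset.sum_nonneg fun i _ => mul_nonneg
            (Real.rpow_nonneg (mul_nonneg (ht i) (ha i)) _)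
            (Real.rpow_nonneg (norm_nonneg _) _)
      _ = X ^ (1/r') * B ^ (1/s) := by
          rw [Real.mul_rpow (Real.rpow_nonneg hX0 _) (Real.rpow_nonneg hB0 _),
            ← Real.rpow_mul hX0, ← Real.rpow_mul hB0, F7, F8]
      _ ≤ (C * B ^ (1/q') * w) * B ^ (1/s) := by
          refine mul_le_mul_of_nonneg_right ?_ (Real.rpow_nonneg hB0 _)
          calc X ^ (1/r') = (∑ i, (‖x i‖ ^ (q/q' - 1) * ‖φ i (T (x i))‖) ^ r') ^ (1/r') := by
                rw [hX_def]
            _ ≤ C * B ^ (1/q') * w := key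
      _ = C * B ^ (1/q) * w := by
          rw [mul_comm (C * B ^ (1/q') * w) (B ^ (1/s))]
          rw [← F6, Real.rpow_add' hB0 (by rw [F6]; positivity)]
          ring
  
/-- For a fixed `p* ∈ (1,∞)`, and pairs `(r₁,q₁)`, `(r₂,q₂)` with `1/rₖ = 1/qₖ + 1/p*`,
a bounded linear operator satisfies the `(r₁,q₁)` summing inequality for some constant
iff it satisfies the `(r₂,q₂)` one for some constant. -/
theorem stmt7 {𝕜 E F : Type*} [RCLike 𝕜]
    [NormedAddCommGroup E] [NormedSpace 𝕜 E] [CompleteSpace E]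
    [NormedAddCommGroup F] [NormedSpace 𝕜 F] [CompleteSpace F]
    (pstar r₁ q₁ r₂ q₂ : ℝ) (hpstar : 1 < pstar)
    (hr₁ : 1 ≤ r₁) (hq₁ : 1 < q₁) (h₁ : 1 / r₁ = 1 / q₁ + 1 / pstar)
    (hr₂ : 1 ≤ r₂) (hq₂ : 1 < q₂) (h₂ : 1 / r₂ = 1 / q₂ + 1 / pstar)
    (T : E →L[𝕜] F) :
    (∃ C ≥ 0, ∀ (m : ℕ) (x : Fin m → E) (φ : Fin m → F →L[𝕜] 𝕜),
        (∑ i, ‖φ i (T (x i))‖ ^ r₁) ^ (1 / r₁) ≤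
          C * (∑ i, ‖x i‖ ^ q₁) ^ (1 / q₁) * weakNorm pstar φ)
    ↔ (∃ C ≥ 0, ∀ (m : ℕ) (x : Fin m → E) (φ : Fin m → F →L[𝕜] 𝕜),
        (∑ i, ‖φ i (T (x i))‖ ^ r₂) ^ (1 / r₂) ≤
          C * (∑ i, ‖x i‖ ^ q₂) ^ (1 / q₂) * weakNorm pstar φ) := by
  rcases le_total q₁ q₂ with hle | hle
  · exact ⟨key_incl pstar r₁ q₁ r₂ q₂ hr₁ hq₁ h₁ hr₂ hq₂ h₂ hle T,
      key_decl pstar r₁ q₁ r₂ q₂ hr₁ hq₁ h₁ hr₂ hq₂ h₂ hle T⟩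
  · exact ⟨key_decl pstar r₂ q₂ r₁ q₁ hr₂ hq₂ h₂ hr₁ hq₁ h₁ hle T,
      key_incl pstar r₂ q₂ r₁ q₁ hr₂ hq₂ h₂ hr₁ hq₁ h₁ hle T⟩
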